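/- Let α', β' be positive real numbers with β' ≥ α', and set δ' = (1+β')/α'. Suppose that for every sufficiently large real t there exists a nonzero x ∈ ℤ^{n+1} with r(x) < t and t^{−β'} < h(x) < t^{−α'} − t^{−β'}. Then every primitive integer point v ∈ ℤ^{n+1} (i.e., with coprime coordinates) with h(v) sufficiently large satisfies r(v) ≥ h(v)^{1−δ'}. -/

import Mathlib

open scoped RealInnerProductSpace

/-- The vector `(1, θ₁, …, θₙ) ∈ ℝ^{n+1}`. -/
noncomputable def thetaVec (n : ℕ) (θ : Fin n → ℝ) : EuclideanSpace ℝ (Fin (n+1)) :=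
  (EuclideanSpace.equiv (Fin (n+1)) ℝ).symm (Fin.cons 1 θ)

/-- The line `ℓ` spanned by `(1, θ₁, …, θₙ)`. -/
noncomputable def lineTheta (n : ℕ) (θ : Fin n → ℝ) :
    Submodule ℝ (EuclideanSpace ℝ (Fin (n+1))) :=
  Submodule.span ℝ {thetaVec n θ}

/-- `r(x)`: the Euclidean distance from `x` to the line `ℓ`. -/
noncomputable def rdist (n : ℕ) (θ : Fin n → ℝ) (x : EuclideanSpace ℝ (Fin (n+1))) : ℝ :=
  Metric.infDist x (lineTheta n θ : Set (EuclideanSpace ℝ (Fin (n+1))))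

/-- `h(x)`: the Euclidean distance from `x` to `ℓ^⊥`. -/
noncomputable def hdist (n : ℕ) (θ : Fin n → ℝ) (x : EuclideanSpace ℝ (Fin (n+1))) : ℝ :=
  Metric.infDist x ((lineTheta n θ)ᗮ : Set (EuclideanSpace ℝ (Fin (n+1))))

/-- `x ∈ ℤ^{n+1}`: all coordinates of `x` are integers. -/
def IsIntegerPoint (n : ℕ) (x : EuclideanSpace ℝ (Fin (n+1))) : Prop :=
  ∀ i, ∃ m : ℤ, x i = (m : ℝ)

/-- The point of `ℝ^{n+1}` with integer coordinates `m`. -/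
noncomputable def intPt (n : ℕ) (m : Fin (n+1) → ℤ) : EuclideanSpace ℝ (Fin (n+1)) :=
  (EuclideanSpace.equiv (Fin (n+1)) ℝ).symm (fun i => (m i : ℝ))

lemma thetaVec_ne_zero (n : ℕ) (θ : Fin n → ℝ) : thetaVec n θ ≠ 0 := by
  intro h
  have : thetaVec n θ 0 = 1 := rfl
  rw [h] at this
  simpa using this

lemma lineTheta_eq_span_unit (n : ℕ) (θ : Fin n → ℝ) :
    lineTheta n θ = Submodule.span ℝ {(‖thetaVec n θ‖⁻¹ : ℝ) • thetaVec n θ} := by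
  have h0 : (‖thetaVec n θ‖ : ℝ) ≠ 0 := norm_ne_zero_iff.2 (thetaVec_ne_zero n θ)
  rw [lineTheta]
  exact (Submodule.span_singleton_smul_eq (IsUnit.mk0 _ (inv_ne_zero h0)) _).symm

lemma norm_unit_thetaVec (n : ℕ) (θ : Fin n → ℝ) :
    ‖(‖thetaVec n θ‖⁻¹ : ℝ) • thetaVec n θ‖ = 1 :=
  norm_smul_inv_norm (thetaVec_ne_zero n θ)

lemma rdist_eq (n : ℕ) (θ : Fin n → ℝ) (x : EuclideanSpace ℝ (Fin (n+1))) :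
    rdist n θ x = ‖x - ⟪(‖thetaVec n θ‖⁻¹ : ℝ) • thetaVec n θ, x⟫ •
      ((‖thetaVec n θ‖⁻¹ : ℝ) • thetaVec n θ)‖ := by
  set u := (‖thetaVec n θ‖⁻¹ : ℝ) • thetaVec n θ with hu
  have hproj : ((lineTheta n θ).starProjection x : EuclideanSpace ℝ (Fin (n+1)))
      = ⟪u, x⟫ • u := by
    have hK : ∀ K K' : Submodule ℝ (EuclideanSpace ℝ (Fin (n+1))), K = K' →
        ∀ [K.HasOrthogonalProjection] [K'.HasOrthogonalProjection],
        K.starProjection x = K'.starProjection x := by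
      rintro K _ rfl _ _; rfl
    rw [hK _ _ (lineTheta_eq_span_unit n θ)]
    exact Submodule.starProjection_unit_singleton ℝ (norm_unit_thetaVec n θ) x
  rw [rdist, Metric.infDist_eq_iInf]
  simp_rw [dist_eq_norm]
  rw [show (⨅ y : (lineTheta n θ : Set (EuclideanSpace ℝ (Fin (n+1)))), ‖x - y‖)
      = ‖x - (lineTheta n θ).starProjection x‖ from (Submodule.starProjection_minimal x).symm,
    hproj]

lemma hdist_eq (n : ℕ) (θ : Fin n → ℝ) (x : EuclideanSpace ℝ (Fin (n+1))) :
    hdist n θ x = |⟪(‖thetaVec n θ‖⁻¹ : ℝ) • thetaVec n θ, x⟫| := by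
  set u := (‖thetaVec n θ‖⁻¹ : ℝ) • thetaVec n θ with hu
  have hproj : ((lineTheta n θ).starProjection x : EuclideanSpace ℝ (Fin (n+1)))
      = ⟪u, x⟫ • u := by
    have hK : ∀ K K' : Submodule ℝ (EuclideanSpace ℝ (Fin (n+1))), K = K' →
        ∀ [K.HasOrthogonalProjection] [K'.HasOrthogonalProjection],
        K.starProjection x = K'.starProjection x := by
      rintro K _ rfl _ _; rfl
    rw [hK _ _ (lineTheta_eq_span_unit n θ)]
    exact Submodule.starProjection_unit_singleton ℝ (norm_unit_thetaVec n θ) x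
  rw [hdist, Metric.infDist_eq_iInf]
  simp_rw [dist_eq_norm]
  rw [show (⨅ y : ((lineTheta n θ)ᗮ : Set (EuclideanSpace ℝ (Fin (n+1)))), ‖x - y‖)
      = ‖x - (lineTheta n θ)ᗮ.starProjection x‖ from (Submodule.starProjection_minimal x).symm]
  rw [Submodule.starProjection_orthogonal_val, sub_sub_cancel, hproj, norm_smul,
    norm_unit_thetaVec n θ, mul_one, Real.norm_eq_abs]

lemma inner_decomp (E : Type*) [NormedAddCommGroup E] [InnerProductSpace ℝ E]
    (u x y : E) (huu : ⟪u, u⟫ = 1) :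
    ⟪x, y⟫ = ⟪u, x⟫ * ⟪u, y⟫ + ⟪x - ⟪u, x⟫ • u, y - ⟪u, y⟫ • u⟫ := by
  simp only [inner_sub_left, inner_sub_right, real_inner_smul_left,
    real_inner_smul_right, huu]
  rw [real_inner_comm x u]
  ring

lemma inner_intPt (n : ℕ) (m v : Fin (n+1) → ℤ) :
    ⟪intPt n m, intPt n v⟫ = ((∑ i, m i * v i : ℤ) : ℝ) := by
  simp [intPt, PiLp.inner_apply, EuclideanSpace.equiv, RCLike.inner_apply, mul_comm]

/-- let `0 < α' ≤ β'` and `δ' = (1+β')/α'`.  If for every sufficiently large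
real `t` there is a nonzero integer point `x` with `r(x) < t` and
`t^{-β'} < h(x) < t^{-α'} - t^{-β'}`, then every primitive integer point `v` with `h(v)`
sufficiently large satisfies `r(v) ≥ h(v)^{1-δ'}`. -/
theorem stmt17 (n : ℕ) (hn : 2 ≤ n) (θ : Fin n → ℝ)
    (α' β' : ℝ) (hα' : 0 < α') (hαβ' : α' ≤ β')
    (happrox : ∃ T : ℝ, ∀ s : ℝ, T ≤ s →
      ∃ m : Fin (n+1) → ℤ, m ≠ 0 ∧ rdist n θ (intPt n m) < s ∧
        s ^ (-β') < hdist n θ (intPt n m) ∧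
        hdist n θ (intPt n m) < s ^ (-α') - s ^ (-β')) :
    ∃ H₀ : ℝ, ∀ v : Fin (n+1) → ℤ, Finset.univ.gcd v = 1 →
      H₀ ≤ hdist n θ (intPt n v) →
      rdist n θ (intPt n v) ≥ hdist n θ (intPt n v) ^ (1 - (1 + β') / α') := by
  obtain ⟨T, hT⟩ := happrox
  set u := (‖thetaVec n θ‖⁻¹ : ℝ) • thetaVec n θ with hu_def
  refine ⟨(max T 1) ^ α' + 1, fun v _ hH ↦ ?_⟩
  by_contra hcon
  push_neg at hcon
  set H := hdist n θ (intPt n v) with hH_def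
  have hmax1 : (1:ℝ) ≤ max T 1 := le_max_right _ _
  have hmaxpos : (0:ℝ) < max T 1 := lt_of_lt_of_le one_pos hmax1
  have hH1 : 1 < H := by
    have : (1:ℝ) ≤ (max T 1) ^ α' := Real.one_le_rpow hmax1 hα'.le
    linarith
  have hHpos : (0:ℝ) < H := lt_trans one_pos hH1
  set s := H ^ (1/α') with hs_def
  have hspos : 0 < s := Real.rpow_pos_of_pos hHpos _
  have hsT : T ≤ s := by
    have h1 : max T 1 = ((max T 1) ^ α') ^ (1/α') := by
      rw [← Real.rpow_mul hmaxpos.le, mul_one_div_cancel hα'.ne', Real.rpow_one]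
    have h2 : ((max T 1) ^ α') ^ (1/α') ≤ H ^ (1/α') := by
      apply Real.rpow_le_rpow (Real.rpow_nonneg hmaxpos.le _) (by linarith)
        (by positivity)
    calc T ≤ max T 1 := le_max_left _ _
      _ = ((max T 1) ^ α') ^ (1/α') := h1
      _ ≤ s := h2
  obtain ⟨m, hm0, hr, hh1, hh2⟩ := hT s hsT
  -- key rpow identities
  have key1 : s ^ (-α') = H⁻¹ := by
    rw [hs_def, ← Real.rpow_mul hHpos.le,
      show (1/α') * (-α') = -1 by field_simp, Real.rpow_neg_one]
  have key2 : s ^ (-β') = H ^ (-(β'/α')) := by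
    rw [hs_def, ← Real.rpow_mul hHpos.le]
    ring_nf
  have key3 : s * H ^ (1 - (1+β')/α') = H * s ^ (-β') := by
    have hr1 : H * H ^ (-(β'/α')) = H ^ ((1:ℝ) + -(β'/α')) := by
      rw [Real.rpow_add hHpos, Real.rpow_one]
    rw [key2, hs_def, ← Real.rpow_add hHpos, hr1]
    congr 1
    field_simp
    ring
  -- abbreviations
  set a := ⟪u, intPt n m⟫ with ha_def
  set b := ⟪u, intPt n v⟫ with hb_def
  have hhx : hdist n θ (intPt n m) = |a| := hdist_eq n θ _
  have hhv : H = |b| := hdist_eq n θ _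
  have hrx : rdist n θ (intPt n m) = ‖intPt n m - a • u‖ := rdist_eq n θ _
  have hrv : rdist n θ (intPt n v) = ‖intPt n v - b • u‖ := rdist_eq n θ _
  have hsβ : 0 < s ^ (-β') := Real.rpow_pos_of_pos hspos _
  -- decomposition of the inner product
  have huu : ⟪u, u⟫ = 1 := by
    have := norm_unit_thetaVec n θ
    rw [real_inner_self_eq_norm_sq, ← hu_def] at *
    rw [this]; norm_num
  have hdecomp : ⟪intPt n m, intPt n v⟫
      = a * b + ⟪intPt n m - a • u, intPt n v - b • u⟫ :=
    inner_decomp _ u (intPt n m) (intPt n v) huu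
  -- the inner product is an integer
  obtain ⟨k, hk⟩ : ∃ k : ℤ, ⟪intPt n m, intPt n v⟫ = (k : ℝ) :=
    ⟨∑ i, m i * v i, inner_intPt n m v⟩
  -- bound on the cross term
  have hcross : |⟪intPt n m - a • u, intPt n v - b • u⟫| < H * s ^ (-β') := by
    calc |⟪intPt n m - a • u, intPt n v - b • u⟫|
        ≤ ‖intPt n m - a • u‖ * ‖intPt n v - b • u‖ := abs_real_inner_le_norm _ _
      _ < s * H ^ (1 - (1 + β') / α') := by
          apply mul_lt_mul'' (hrx ▸ hr) (hrv ▸ hcon) (norm_nonneg _) (norm_nonneg _)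
      _ = H * s ^ (-β') := key3
  -- bounds on |a| * H
  have haH_lt : |a| * H < 1 - s ^ (-β') * H := by
    have h1 : |a| < H⁻¹ - s ^ (-β') := by rw [← key1, ← hhx]; exact hh2
    have := mul_lt_mul_of_pos_right h1 hHpos
    rw [sub_mul, inv_mul_cancel₀ hHpos.ne'] at this
    linarith
  have haH_gt : s ^ (-β') * H < |a| * H := by
    apply mul_lt_mul_of_pos_right _ hHpos
    rw [← hhx]; exact hh1
  -- |k| < 1 so k = 0
  have habs : |a * b| = |a| * H := by rw [abs_mul, hhv]
  have hk1 : |(k : ℝ)| < 1 := by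
    rw [← hk, hdecomp]
    calc |a * b + ⟪intPt n m - a • u, intPt n v - b • u⟫|
        ≤ |a * b| + |⟪intPt n m - a • u, intPt n v - b • u⟫| := abs_add_le _ _
      _ < (1 - s ^ (-β') * H) + H * s ^ (-β') := by
          rw [habs]; exact add_lt_add haH_lt hcross
      _ = 1 := by ring
  have hk0 : k = 0 := by
    have h2 : |k| < 1 := by exact_mod_cast hk1
    rw [abs_lt] at h2
    omega
  rw [hk0] at hk
  -- contradiction: a*b = -cross, but |a*b| > |cross|
  have : a * b = -⟪intPt n m - a • u, intPt n v - b • u⟫ := by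
    rw [hdecomp] at hk; push_cast at hk; linarith
  have h1 : |a * b| < H * s ^ (-β') := by rw [this, abs_neg]; exact hcross
  rw [habs] at h1
  nlinarith [hsβ, hHpos]
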